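/- Let H be a pencilled hfd line set in PG(5,K) whose set of vertices is not contained in a single line, i.e. there is no 2-dimensional subspace of V containing every vertex of H. Then there exists a plane Δ (3-dimensional subspace of V) such that the vertices of H are exactly the points of Δ, Δ is the unique carrier plane of H, and H equals the set of all lines contained in Δ. -/

import Mathlib

/-- The Klein quadratic form on `K^6`. -/
def kleinQ {K : Type*} [Field K] (x : Fin 6 → K) : K :=
  x 0 * x 1 + x 2 * x 3 + x 4 * x 5

/-- The polar bilinear form `B(x,y) = Q(x+y) - Q(x) - Q(y)`. -/
def kleinB {K : Type*} [Field K] (x y : Fin 6 → K) : K :=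
  kleinQ (x + y) - kleinQ x - kleinQ y

/-- The polar subspace `π₅(S)` of a subspace `S`. -/
def kleinPolar {K : Type*} [Field K] (S : Submodule K (Fin 6 → K)) :
    Submodule K (Fin 6 → K) where
  carrier := {y | ∀ s ∈ S, kleinB s y = 0}
  add_mem' := by
    intro a b ha hb s hs
    have h1 := ha s hs
    have h2 := hb s hs
    simp only [kleinB, kleinQ, Pi.add_apply] at *
    linear_combination h1 + h2
  zero_mem' := by
    intro s hs
    simp [kleinB, kleinQ]
  smul_mem' := by
    intro c a ha s hs
    have h1 := ha s hs
    simp only [kleinB, kleinQ, Pi.add_apply, Pi.smul_apply, smul_eq_mul] at *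
    linear_combination c * h1

/-- `τ` is a tangent hyperplane of the Klein quadric. -/
def IsTangentHyperplane {K : Type*} [Field K] (τ : Submodule K (Fin 6 → K)) : Prop :=
  ∃ x : Fin 6 → K, x ≠ 0 ∧ kleinQ x = 0 ∧ τ = kleinPolar (Submodule.span K {x})

/-- A subspace is external to the Klein quadric. -/
def IsExternal {K : Type*} [Field K] (S : Submodule K (Fin 6 → K)) : Prop :=
  ∀ s ∈ S, s ≠ 0 → kleinQ s ≠ 0

/-- A `0`-secant of the Klein quadric: an external line. -/
def IsSecant {K : Type*} [Field K] (G : Submodule K (Fin 6 → K)) : Prop :=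
  Module.finrank K G = 2 ∧ IsExternal G

/-- The pencil of lines with vertex `v` and carrier plane `κ`. -/
def pencil {K : Type*} [Field K] (v κ : Submodule K (Fin 6 → K)) :
    Set (Submodule K (Fin 6 → K)) :=
  {X | Module.finrank K X = 2 ∧ v ≤ X ∧ X ≤ κ}

/-- An hfd line set: a set of `0`-secants such that every tangent hyperplane
contains exactly one member. -/
def IsHfd {K : Type*} [Field K] (H : Set (Submodule K (Fin 6 → K))) : Prop :=
  (∀ G ∈ H, IsSecant G) ∧
    ∀ τ : Submodule K (Fin 6 → K), IsTangentHyperplane τ → ∃! G, G ∈ H ∧ G ≤ τ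

/-- A pencilled hfd line set: every member lies in a pencil entirely contained in `H`. -/
def IsPencilledHfd {K : Type*} [Field K] (H : Set (Submodule K (Fin 6 → K))) : Prop :=
  IsHfd H ∧
    ∀ G ∈ H, ∃ v κ : Submodule K (Fin 6 → K), Module.finrank K v = 1 ∧
      Module.finrank K κ = 3 ∧ v ≤ κ ∧ pencil v κ ⊆ H ∧ G ∈ pencil v κ

/-- `v` is a vertex of the pencilled hfd line set `H`. -/
def IsVertex {K : Type*} [Field K] (H : Set (Submodule K (Fin 6 → K)))
    (v : Submodule K (Fin 6 → K)) : Prop :=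
  Module.finrank K v = 1 ∧ ∃ κ : Submodule K (Fin 6 → K),
    Module.finrank K κ = 3 ∧ v ≤ κ ∧ pencil v κ ⊆ H

/-- `κ` is a carrier plane of the pencilled hfd line set `H`. -/
def IsCarrier {K : Type*} [Field K] (H : Set (Submodule K (Fin 6 → K)))
    (κ : Submodule K (Fin 6 → K)) : Prop :=
  Module.finrank K κ = 3 ∧ ∃ v : Submodule K (Fin 6 → K),
    Module.finrank K v = 1 ∧ v ≤ κ ∧ pencil v κ ⊆ H


section KleinHelpers

open Module Submodule

variable {K : Type*} [Field K]

/-- The polar form as a Mathlib bilinear form. -/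
def KB (K : Type*) [Field K] : LinearMap.BilinForm K (Fin 6 → K) :=
  LinearMap.mk₂ K
    (fun x y => x 0 * y 1 + x 1 * y 0 + x 2 * y 3 + x 3 * y 2 + x 4 * y 5 + x 5 * y 4)
    (fun x x' y => by simp only [Pi.add_apply]; ring)
    (fun c x y => by simp only [Pi.smul_apply, smul_eq_mul]; ring)
    (fun x y y' => by simp only [Pi.add_apply]; ring)
    (fun c x y => by simp only [Pi.smul_apply, smul_eq_mul]; ring)

lemma KB_apply (x y : Fin 6 → K) :
    KB K x y = x 0 * y 1 + x 1 * y 0 + x 2 * y 3 + x 3 * y 2 + x 4 * y 5 + x 5 * y 4 := rfl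

lemma kleinB_eq (x y : Fin 6 → K) : kleinB x y = KB K x y := by
  simp only [kleinB, kleinQ, KB_apply, Pi.add_apply]; ring

lemma KB_symm (x y : Fin 6 → K) : KB K x y = KB K y x := by
  simp only [KB_apply]; ring

lemma kleinB_symm (x y : Fin 6 → K) : kleinB x y = kleinB y x := by
  rw [kleinB_eq, kleinB_eq, KB_symm]

lemma KB_refl : (KB K).IsRefl := fun x y h => by rwa [KB_symm]

lemma KB_nondeg : (KB K).Nondegenerate := by
  refine (LinearMap.IsRefl.nondegenerate_iff_separatingLeft (B := KB K)
    (fun x y h => by rwa [KB_symm])).mpr ?_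
  intro x hx
  funext i
  fin_cases i
  · simpa [KB_apply, Pi.single_apply] using hx (Pi.single 1 1)
  · simpa [KB_apply, Pi.single_apply] using hx (Pi.single 0 1)
  · simpa [KB_apply, Pi.single_apply] using hx (Pi.single 3 1)
  · simpa [KB_apply, Pi.single_apply] using hx (Pi.single 2 1)
  · simpa [KB_apply, Pi.single_apply] using hx (Pi.single 5 1)
  · simpa [KB_apply, Pi.single_apply] using hx (Pi.single 4 1)

lemma mem_kleinPolar {S : Submodule K (Fin 6 → K)} {y : Fin 6 → K} :
    y ∈ kleinPolar S ↔ ∀ s ∈ S, kleinB s y = 0 := Iff.rfl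

lemma kleinPolar_eq (S : Submodule K (Fin 6 → K)) :
    kleinPolar S = (KB K).orthogonal S := by
  ext y
  rw [mem_kleinPolar, LinearMap.BilinForm.mem_orthogonal_iff]
  constructor
  · intro h s hs
    have := h s hs; rwa [kleinB_eq] at this
  · intro h s hs
    rw [kleinB_eq]; exact h s hs

lemma finrank_V6 : finrank K (Fin 6 → K) = 6 := by simp

lemma finrank_kleinPolar (S : Submodule K (Fin 6 → K)) :
    finrank K (kleinPolar S) = 6 - finrank K S := by
  rw [kleinPolar_eq, LinearMap.BilinForm.finrank_orthogonal KB_nondeg, finrank_V6]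

lemma mem_kleinPolar_span {z y : Fin 6 → K} :
    y ∈ kleinPolar (Submodule.span K {z}) ↔ kleinB z y = 0 := by
  rw [mem_kleinPolar]
  constructor
  · intro h; exact h z (Submodule.mem_span_singleton_self z)
  · intro h s hs
    obtain ⟨c, rfl⟩ := Submodule.mem_span_singleton.mp hs
    rw [kleinB_eq] at h ⊢
    rw [map_smul, LinearMap.smul_apply, smul_eq_mul, h, mul_zero]

lemma le_kleinPolar_span_iff (S : Submodule K (Fin 6 → K)) (z : Fin 6 → K) :
    S ≤ kleinPolar (Submodule.span K {z}) ↔ z ∈ kleinPolar S := by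
  rw [mem_kleinPolar]
  constructor
  · intro h s hs
    have := mem_kleinPolar_span.mp (h hs)
    rwa [kleinB_symm]
  · intro h s hs
    rw [mem_kleinPolar_span, kleinB_symm]
    exact h s hs

lemma exists_notin_of_finrank_lt {p q : Submodule K (Fin 6 → K)}
    (h : finrank K p < finrank K q) : ∃ a ∈ q, a ∉ p := by
  by_contra hc
  push_neg at hc
  have : q ≤ p := fun a ha => hc a ha
  have := Submodule.finrank_mono this
  omega

lemma finrank_sup_point (p w : Submodule K (Fin 6 → K)) (hw : finrank K w = 1)
    (hnle : ¬ w ≤ p) :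
    finrank K (p ⊔ w : Submodule K (Fin 6 → K)) = finrank K p + 1 := by
  have hinf : p ⊓ w = ⊥ := by
    by_contra hne
    have h1 : finrank K (p ⊓ w : Submodule K (Fin 6 → K)) ≤ 1 := hw ▸ Submodule.finrank_mono inf_le_right
    have h0 : finrank K (p ⊓ w : Submodule K (Fin 6 → K)) ≠ 0 := by
      rwa [Ne, Submodule.finrank_eq_zero]
    have heq := Submodule.eq_of_le_of_finrank_le (inf_le_right : p ⊓ w ≤ w) (by omega)
    exact hnle (heq ▸ (inf_le_left : p ⊓ w ≤ p))
  have hs := Submodule.finrank_sup_add_finrank_inf_eq p w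
  rw [hinf, finrank_bot] at hs
  omega

lemma points_ne_not_le {v w : Submodule K (Fin 6 → K)} (hv : finrank K v = 1)
    (hw : finrank K w = 1) (hne : v ≠ w) : ¬ w ≤ v := by
  intro h
  exact hne (Submodule.eq_of_le_of_finrank_le h (by omega)).symm

lemma exists_singular_perp (S : Submodule K (Fin 6 → K)) (hS : finrank K S ≤ 2) :
    ∃ z : Fin 6 → K, z ≠ 0 ∧ kleinQ z = 0 ∧ z ∈ kleinPolar S := by
  classical
  let f : (Fin 6 → K) →ₗ[K] (Fin 3 → K) := LinearMap.pi (fun i => LinearMap.proj (![1, 3, 5] i))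
  have hsurj : Function.Surjective f := by
    intro w
    refine ⟨Pi.single 1 (w 0) + Pi.single 3 (w 1) + Pi.single 5 (w 2), ?_⟩
    funext i
    fin_cases i <;> simp [f, Pi.single_apply]
  have h3 : finrank K (Fin 3 → K) = 3 := by simp
  have hker : finrank K (LinearMap.ker f) = 3 := by
    have h1 := LinearMap.finrank_range_add_finrank_ker f
    rw [LinearMap.range_eq_top.mpr hsurj, finrank_top, finrank_V6, h3] at h1
    omega
  have hP : finrank K (kleinPolar S) = 6 - finrank K S := finrank_kleinPolar S
  have hle6 : finrank K (kleinPolar S ⊔ LinearMap.ker f : Submodule K (Fin 6 → K)) ≤ 6 :=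
    le_trans (Submodule.finrank_le _) (le_of_eq finrank_V6)
  have hs := Submodule.finrank_sup_add_finrank_inf_eq (kleinPolar S) (LinearMap.ker f)
  have hpos : 0 < finrank K (kleinPolar S ⊓ LinearMap.ker f : Submodule K (Fin 6 → K)) := by
    omega
  have hnebot : (kleinPolar S ⊓ LinearMap.ker f : Submodule K (Fin 6 → K)) ≠ ⊥ := by
    intro h
    rw [h, finrank_bot] at hpos
    omega
  obtain ⟨z, hzmem, hz0⟩ := Submodule.ne_bot_iff _ |>.mp hnebot
  have hzk : f z = 0 := LinearMap.mem_ker.mp hzmem.2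
  have h1 : z 1 = 0 := congrFun hzk 0
  have h3' : z 3 = 0 := congrFun hzk 1
  have h5 : z 5 = 0 := congrFun hzk 2
  refine ⟨z, hz0, ?_, hzmem.1⟩
  simp [kleinQ, h1, h3', h5]

lemma finrank_inf_hyperplane (κ : Submodule K (Fin 6 → K)) (z : Fin 6 → K)
    (hκ : finrank K κ = 3) (hz0 : z ≠ 0)
    (hnle : ¬ κ ≤ kleinPolar (Submodule.span K {z})) :
    finrank K (κ ⊓ kleinPolar (Submodule.span K {z}) : Submodule K (Fin 6 → K)) = 2 := by
  have h5 : finrank K (kleinPolar (Submodule.span K {z})) = 5 := by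
    rw [finrank_kleinPolar, finrank_span_singleton hz0]
  have hlt : kleinPolar (Submodule.span K {z}) < κ ⊔ kleinPolar (Submodule.span K {z}) := by
    refine lt_of_le_of_ne le_sup_right (fun h => hnle ?_)
    exact le_sup_left.trans (le_of_eq h.symm)
  have h6' := Submodule.finrank_lt_finrank_of_lt hlt
  have hle6 : finrank K (κ ⊔ kleinPolar (Submodule.span K {z}) : Submodule K (Fin 6 → K)) ≤ 6 :=
    le_trans (Submodule.finrank_le _) (le_of_eq finrank_V6)
  have hs := Submodule.finrank_sup_add_finrank_inf_eq κ (kleinPolar (Submodule.span K {z}))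
  omega

lemma pencil_two_members (v κ : Submodule K (Fin 6 → K)) (hv : finrank K v = 1)
    (hκ : finrank K κ = 3) (hvκ : v ≤ κ) :
    ∃ G1 G2, G1 ∈ pencil v κ ∧ G2 ∈ pencil v κ ∧ G1 ≠ G2 := by
  obtain ⟨a, haκ, hav⟩ := exists_notin_of_finrank_lt (p := v) (q := κ) (by omega)
  have ha0 : a ≠ 0 := fun h => hav (h ▸ v.zero_mem)
  have hG1 : finrank K (v ⊔ Submodule.span K {a} : Submodule K (Fin 6 → K)) = 2 := by
    rw [finrank_sup_point v _ (finrank_span_singleton ha0)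
      (fun h => hav (h (Submodule.mem_span_singleton_self a))), hv]
  have hG1κ : v ⊔ Submodule.span K {a} ≤ κ :=
    sup_le hvκ ((Submodule.span_le).mpr (Set.singleton_subset_iff.mpr haκ))
  obtain ⟨b, hbκ, hbG1⟩ :=
    exists_notin_of_finrank_lt (p := v ⊔ Submodule.span K {a}) (q := κ) (by omega)
  have hb0 : b ≠ 0 := fun h => hbG1 (h ▸ Submodule.zero_mem _)
  have hbv : b ∉ v := fun h => hbG1 ((le_sup_left : v ≤ v ⊔ Submodule.span K {a}) h)
  have hG2 : finrank K (v ⊔ Submodule.span K {b} : Submodule K (Fin 6 → K)) = 2 := by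
    rw [finrank_sup_point v _ (finrank_span_singleton hb0)
      (fun h => hbv (h (Submodule.mem_span_singleton_self b))), hv]
  refine ⟨v ⊔ Submodule.span K {a}, v ⊔ Submodule.span K {b},
    ⟨hG1, le_sup_left, hG1κ⟩,
    ⟨hG2, le_sup_left,
      sup_le hvκ ((Submodule.span_le).mpr (Set.singleton_subset_iff.mpr hbκ))⟩, ?_⟩
  intro h
  apply hbG1
  rw [h]
  exact (le_sup_right : Submodule.span K {b} ≤ v ⊔ Submodule.span K {b})
    (Submodule.mem_span_singleton_self b)

lemma carrier_no_singular_perp {H : Set (Submodule K (Fin 6 → K))} (hH : IsHfd H)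
    (v κ : Submodule K (Fin 6 → K)) (hv : finrank K v = 1) (hκ : finrank K κ = 3)
    (hvκ : v ≤ κ) (hsub : pencil v κ ⊆ H) (z : Fin 6 → K) (hz0 : z ≠ 0)
    (hzQ : kleinQ z = 0) : ¬ κ ≤ kleinPolar (Submodule.span K {z}) := by
  intro hle
  obtain ⟨G1, G2, h1, h2, hne⟩ := pencil_two_members v κ hv hκ hvκ
  have huniq := hH.2 _ ⟨z, hz0, hzQ, rfl⟩
  exact hne (huniq.unique ⟨hsub h1, h1.2.2.trans hle⟩ ⟨hsub h2, h2.2.2.trans hle⟩)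

lemma pencil_member_perp {H : Set (Submodule K (Fin 6 → K))} (hH : IsHfd H)
    (v κ : Submodule K (Fin 6 → K)) (hv : finrank K v = 1) (hκ : finrank K κ = 3)
    (hvκ : v ≤ κ) (hsub : pencil v κ ⊆ H) (z : Fin 6 → K) (hz0 : z ≠ 0)
    (hzQ : kleinQ z = 0) (hvz : v ≤ kleinPolar (Submodule.span K {z})) :
    κ ⊓ kleinPolar (Submodule.span K {z}) ∈ H ∧
      v ≤ κ ⊓ kleinPolar (Submodule.span K {z}) := by
  have hnle := carrier_no_singular_perp hH v κ hv hκ hvκ hsub z hz0 hzQ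
  have h2 := finrank_inf_hyperplane κ z hκ hz0 hnle
  have hmem : κ ⊓ kleinPolar (Submodule.span K {z}) ∈ pencil v κ :=
    ⟨h2, le_inf hvκ hvz, inf_le_left⟩
  exact ⟨hsub hmem, le_inf hvκ hvz⟩

lemma vertex_le_carrier {H : Set (Submodule K (Fin 6 → K))} (hH : IsHfd H)
    {v1 κ1 v2 κ2 : Submodule K (Fin 6 → K)}
    (hv1 : finrank K v1 = 1) (hκ1 : finrank K κ1 = 3) (hv1κ1 : v1 ≤ κ1)
    (hs1 : pencil v1 κ1 ⊆ H)
    (hv2 : finrank K v2 = 1) (hκ2 : finrank K κ2 = 3) (hv2κ2 : v2 ≤ κ2)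
    (hs2 : pencil v2 κ2 ⊆ H) (hne : v1 ≠ v2) : v2 ≤ κ1 := by
  have hM : finrank K (v1 ⊔ v2 : Submodule K (Fin 6 → K)) = 2 := by
    rw [finrank_sup_point v1 v2 hv2 (points_ne_not_le hv1 hv2 hne), hv1]
  obtain ⟨z, hz0, hzQ, hzP⟩ := exists_singular_perp (v1 ⊔ v2) (le_of_eq hM)
  have hMz : v1 ⊔ v2 ≤ kleinPolar (Submodule.span K {z}) :=
    (le_kleinPolar_span_iff _ _).mpr hzP
  have p1 := pencil_member_perp hH v1 κ1 hv1 hκ1 hv1κ1 hs1 z hz0 hzQ (le_sup_left.trans hMz)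
  have p2 := pencil_member_perp hH v2 κ2 hv2 hκ2 hv2κ2 hs2 z hz0 hzQ (le_sup_right.trans hMz)
  have huniq := hH.2 _ ⟨z, hz0, hzQ, rfl⟩
  have heq : κ1 ⊓ kleinPolar (Submodule.span K {z}) =
      κ2 ⊓ kleinPolar (Submodule.span K {z}) :=
    huniq.unique ⟨p1.1, inf_le_right⟩ ⟨p2.1, inf_le_right⟩
  have : v2 ≤ κ1 ⊓ kleinPolar (Submodule.span K {z}) := heq ▸ p2.2
  exact this.trans inf_le_left

end KleinHelpers

open Module Submodule in
set_option maxHeartbeats 1000000 in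
/-- Main Theorem, part (b): non-collinear vertices.
If the vertices of a pencilled hfd line set `H` are not contained in a single line,
then there is a plane `Δ` whose points are exactly the vertices of `H`, `Δ` is the
unique carrier plane, and `H` is the set of all lines contained in `Δ`. -/
theorem noncollinear_vertices {K : Type*} [Field K]
    (H : Set (Submodule K (Fin 6 → K))) (hH : IsPencilledHfd H)
    (hnc : ¬ ∃ L : Submodule K (Fin 6 → K), Module.finrank K L = 2 ∧
      ∀ v : Submodule K (Fin 6 → K), IsVertex H v → v ≤ L) :
    ∃ Δ : Submodule K (Fin 6 → K), Module.finrank K Δ = 3 ∧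
      (∀ v : Submodule K (Fin 6 → K),
        IsVertex H v ↔ (Module.finrank K v = 1 ∧ v ≤ Δ)) ∧
      (∀ κ : Submodule K (Fin 6 → K), IsCarrier H κ ↔ κ = Δ) ∧
      H = {X : Submodule K (Fin 6 → K) | Module.finrank K X = 2 ∧ X ≤ Δ} := by
  classical
  obtain ⟨hfd, hpen⟩ := hH
  -- Step 1: two distinct vertices
  have step1 : ∃ v1 v2, IsVertex H v1 ∧ IsVertex H v2 ∧ v1 ≠ v2 := by
    by_contra hc
    push_neg at hc
    apply hnc
    by_cases hv : ∃ v, IsVertex H v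
    · obtain ⟨v0, hv0⟩ := hv
      obtain ⟨a, -, hav⟩ := exists_notin_of_finrank_lt (p := v0) (q := ⊤)
        (by rw [hv0.1, finrank_top, finrank_V6]; omega)
      have ha0 : a ≠ 0 := fun h => hav (h ▸ v0.zero_mem)
      refine ⟨v0 ⊔ Submodule.span K {a}, ?_, ?_⟩
      · rw [finrank_sup_point v0 _ (finrank_span_singleton ha0)
          (fun h => hav (h (Submodule.mem_span_singleton_self a))), hv0.1]
      · intro v hvv
        rw [hc v v0 hvv hv0]
        exact le_sup_left
    · push_neg at hv
      set e0 : Fin 6 → K := Pi.single 0 1 with he0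
      set e1 : Fin 6 → K := Pi.single 1 1 with he1
      have h00 : e0 ≠ 0 := by
        intro h
        have := congrFun h 0
        simp [he0] at this
      have h11 : e1 ≠ 0 := by
        intro h
        have := congrFun h 1
        simp [he1] at this
      have hnle : ¬ Submodule.span K {e1} ≤ Submodule.span K {e0} := by
        intro h
        obtain ⟨c, hcc⟩ := Submodule.mem_span_singleton.mp
          (h (Submodule.mem_span_singleton_self e1))
        have := congrFun hcc 1
        simp [he0, he1, Pi.single_apply] at this
      refine ⟨Submodule.span K {e0} ⊔ Submodule.span K {e1}, ?_,
        fun v hvv => absurd hvv (hv v)⟩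
      rw [finrank_sup_point _ _ (finrank_span_singleton h11) hnle,
        finrank_span_singleton h00]
  obtain ⟨v1, v2, hv1, hv2, hne12⟩ := step1
  obtain ⟨hv1r, κ1, hκ1r, hv1κ1, hs1⟩ := hv1
  obtain ⟨hv2r, κ2, hκ2r, hv2κ2, hs2⟩ := hv2
  -- Step 2: a third vertex off the line v1 ⊔ v2
  have hL : finrank K (v1 ⊔ v2 : Submodule K (Fin 6 → K)) = 2 := by
    rw [finrank_sup_point v1 v2 hv2r (points_ne_not_le hv1r hv2r hne12), hv1r]
  have step2 : ∃ v3, IsVertex H v3 ∧ ¬ v3 ≤ v1 ⊔ v2 := by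
    by_contra hc
    push_neg at hc
    exact hnc ⟨v1 ⊔ v2, hL, hc⟩
  obtain ⟨v3, hv3, hv3L⟩ := step2
  obtain ⟨hv3r, κ3, hκ3r, hv3κ3, hs3⟩ := hv3
  have hne13 : v1 ≠ v3 := fun h => hv3L (h ▸ le_sup_left)
  have hne23 : v2 ≠ v3 := fun h => hv3L (h ▸ le_sup_right)
  -- v2, v3 ≤ κ1
  have hv2κ1 : v2 ≤ κ1 :=
    vertex_le_carrier hfd hv1r hκ1r hv1κ1 hs1 hv2r hκ2r hv2κ2 hs2 hne12
  have hv3κ1 : v3 ≤ κ1 :=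
    vertex_le_carrier hfd hv1r hκ1r hv1κ1 hs1 hv3r hκ3r hv3κ3 hs3 hne13
  -- the span of the three vertices is κ1
  have hfr3 : finrank K (v1 ⊔ v2 ⊔ v3 : Submodule K (Fin 6 → K)) = 3 := by
    rw [finrank_sup_point (v1 ⊔ v2) v3 hv3r hv3L, hL]
  have hΔeq : v1 ⊔ v2 ⊔ v3 = κ1 :=
    Submodule.eq_of_le_of_finrank_le (sup_le (sup_le hv1κ1 hv2κ1) hv3κ1) (by omega)
  -- every carrier plane equals κ1
  have carrier_eq : ∀ κ, IsCarrier H κ → κ = κ1 := by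
    rintro κ ⟨hκ3', v, hvr', hvκ', hsubH'⟩
    have h1 : v1 ≤ κ := by
      by_cases h : v = v1
      · exact h ▸ hvκ'
      · exact vertex_le_carrier hfd hvr' hκ3' hvκ' hsubH' hv1r hκ1r hv1κ1 hs1 h
    have h2 : v2 ≤ κ := by
      by_cases h : v = v2
      · exact h ▸ hvκ'
      · exact vertex_le_carrier hfd hvr' hκ3' hvκ' hsubH' hv2r hκ2r hv2κ2 hs2 h
    have h3 : v3 ≤ κ := by
      by_cases h : v = v3
      · exact h ▸ hvκ'
      · exact vertex_le_carrier hfd hvr' hκ3' hvκ' hsubH' hv3r hκ3r hv3κ3 hs3 h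
    have hsup : v1 ⊔ v2 ⊔ v3 ≤ κ := sup_le (sup_le h1 h2) h3
    have := Submodule.eq_of_le_of_finrank_le hsup (by omega)
    rw [← this, hΔeq]
  -- every member of H is a line of κ1
  have HsubΔ : ∀ G ∈ H, G ≤ κ1 := by
    intro G hG
    obtain ⟨v, κ, hvr', hκr', hvκ', hsub', hGp⟩ := hpen G hG
    have hκeq : κ = κ1 := carrier_eq κ ⟨hκr', v, hvr', hvκ', hsub'⟩
    exact hκeq ▸ hGp.2.2
  -- every line of κ1 is in H
  have linesub : ∀ X : Submodule K (Fin 6 → K), finrank K X = 2 → X ≤ κ1 → X ∈ H := by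
    intro X hX2 hXΔ
    obtain ⟨z, hz0, hzQ, hzP⟩ := exists_singular_perp X (le_of_eq hX2)
    have hXz : X ≤ kleinPolar (Submodule.span K {z}) :=
      (le_kleinPolar_span_iff _ _).mpr hzP
    have hnle : ¬ κ1 ≤ kleinPolar (Submodule.span K {z}) :=
      carrier_no_singular_perp hfd v1 κ1 hv1r hκ1r hv1κ1 hs1 z hz0 hzQ
    have hinf2 := finrank_inf_hyperplane κ1 z hκ1r hz0 hnle
    have hXeq : X = κ1 ⊓ kleinPolar (Submodule.span K {z}) :=
      Submodule.eq_of_le_of_finrank_le (le_inf hXΔ hXz) (by omega)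
    obtain ⟨G, ⟨hGH, hGz⟩, -⟩ := hfd.2 _ ⟨z, hz0, hzQ, rfl⟩
    have hGX : G ≤ X := hXeq ▸ le_inf (HsubΔ G hGH) hGz
    have hG2 : finrank K G = 2 := (hfd.1 G hGH).1
    have : G = X := Submodule.eq_of_le_of_finrank_le hGX (by omega)
    exact this ▸ hGH
  refine ⟨κ1, hκ1r, ?_, ?_, ?_⟩
  · intro v
    constructor
    · rintro ⟨hvr', κ, hκr', hvκ', hsub'⟩
      exact ⟨hvr', (carrier_eq κ ⟨hκr', v, hvr', hvκ', hsub'⟩) ▸ hvκ'⟩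
    · rintro ⟨hvr', hvΔ⟩
      exact ⟨hvr', κ1, hκ1r, hvΔ, fun X hX => linesub X hX.1 hX.2.2⟩
  · intro κ
    constructor
    · exact carrier_eq κ
    · rintro rfl
      exact ⟨hκ1r, v1, hv1r, hv1κ1, hs1⟩
  · ext G
    constructor
    · intro hG
      exact ⟨(hfd.1 G hG).1, HsubΔ G hG⟩
    · rintro ⟨h2, hle⟩
      exact linesub G h2 hle
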